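/- arXiv:1404.0337 — 6 statements merged into one kernel-verified Lean document; each statement's English description precedes it below -/
import Mathlib

section
/- For every integer k ≥ 1, every recoloring sequence (with any number of admissible colors) from the coloring α^k to the coloring β^k of the graph B_k contains at least one coloring that uses at least 2k − 1 different colors. -/
/-- A `k`-coloring of `G`: colors in `{1,…,k}`, adjacent vertices differently colored. -/
def IsKColoring {V : Type*} (G : SimpleGraph V) (k : ℕ) (γ : V → ℕ) : Prop :=
  (∀ v, γ v ∈ Finset.Icc 1 k) ∧ ∀ u v, G.Adj u v → γ u ≠ γ v

/-- A `k`-recoloring sequence `seq 0, …, seq ℓ` from `α` to `β`: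
all are `k`-colorings, and consecutive colorings differ on at most one vertex. -/
def IsRecolSeq {V : Type*} (G : SimpleGraph V) (k : ℕ) (seq : ℕ → V → ℕ)
    (ℓ : ℕ) (α β : V → ℕ) : Prop :=
  seq 0 = α ∧ seq ℓ = β ∧ (∀ i ≤ ℓ, IsKColoring G k (seq i)) ∧
  ∀ i < ℓ, ∀ u w, seq i u ≠ seq (i+1) u → seq i w ≠ seq (i+1) w → u = w

/-- The graph `B_k`: vertices `b^i_j` for `i,j ∈ {1,…,k}`, with `b^i_j ~ b^{i'}_{j'}`
iff `i ≠ i'` and `j ≠ j'` (the complement of `K_k □ K_k`). -/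
def Bgraph (k : ℕ) : SimpleGraph (Fin k × Fin k) where
  Adj p q := p.1 ≠ q.1 ∧ p.2 ≠ q.2
  symm := ⟨fun p q h => ⟨h.1.symm, h.2.symm⟩⟩
  loopless := ⟨fun p h => h.1 rfl⟩

/-- The coloring `α^k` of `B_k`: `α^k(b^i_j) = i`. -/
def alphak (k : ℕ) : Fin k × Fin k → ℕ := fun p => p.1.val + 1

/-- The coloring `β^k` of `B_k`: `β^k(b^i_j) = j`. -/
def betak (k : ℕ) : Fin k × Fin k → ℕ := fun p => p.2.val + 1

/-! ### Auxiliary machinery -/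

/-- Column `j` is "non-rainbow" for `γ`: two distinct cells of column `j` share a color. -/
def Vcol {k : ℕ} (γ : Fin k × Fin k → ℕ) (j : Fin k) : Prop :=
  ∃ i i' : Fin k, i ≠ i' ∧ γ (i, j) = γ (i', j)

open Classical in
/-- The set of non-rainbow columns of `γ`. -/
noncomputable def Bs {k : ℕ} (γ : Fin k × Fin k → ℕ) : Finset (Fin k) :=
  Finset.univ.filter (fun j => Vcol γ j)

lemma mem_Bs {k : ℕ} {γ : Fin k × Fin k → ℕ} {j : Fin k} :
    j ∈ Bs γ ↔ Vcol γ j := by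
  simp [Bs]

/-- For a proper coloring of `B_k`, a color repeated in column `j` has its whole class
inside column `j`. -/
lemma class_in_col {k : ℕ} {γ : Fin k × Fin k → ℕ}
    (hp : ∀ u w, (Bgraph k).Adj u w → γ u ≠ γ w) {i i' j : Fin k}
    (hne : i ≠ i') (he : γ (i, j) = γ (i', j)) :
    ∀ u : Fin k × Fin k, γ u = γ (i, j) → u.2 = j := by
  intro u hu
  by_contra hj
  rcases eq_or_ne u.1 i with h1 | h1
  · exact hp u (i', j) (show u.1 ≠ (i', j).1 ∧ u.2 ≠ (i', j).2 from ⟨by rw [h1]; exact hne, hj⟩) (hu.trans he)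
  · exact hp u (i, j) (show u.1 ≠ (i, j).1 ∧ u.2 ≠ (i, j).2 from ⟨h1, hj⟩) hu

/-- Discrete intermediate value theorem. -/
lemma ivt (f : ℕ → ℕ) (m : ℕ) : ∀ ℓ, f 0 ≤ m → m ≤ f ℓ →
    (∀ t < ℓ, f (t+1) ≤ f t + 1) → ∃ t ≤ ℓ, f t = m := by
  intro ℓ
  induction ℓ with
  | zero => exact fun h0 hl _ => ⟨0, le_refl 0, le_antisymm h0 hl⟩
  | succ n ih =>
    intro h0 hl hstep
    rcases le_or_gt m (f n) with h | h
    · obtain ⟨t, ht, he⟩ := ih h0 h (fun t ht => hstep t (ht.trans (Nat.lt_succ_self n)))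
      exact ⟨t, ht.trans (Nat.le_succ n), he⟩
    · refine ⟨n + 1, le_refl _, le_antisymm ?_ hl⟩
      exact (hstep n (Nat.lt_succ_self n)).trans (Nat.succ_le_of_lt h)

/-- One recoloring step can only change the non-rainbow status of the column of the
changed vertex. -/
lemma Bs_step {k : ℕ} {γ γ' : Fin k × Fin k → ℕ} (v : Fin k × Fin k)
    (hdiff : ∀ u, γ u ≠ γ' u → u = v) :
    Bs γ' ⊆ insert v.2 (Bs γ) := by
  intro j hj
  rcases eq_or_ne j v.2 with h | h
  · exact h ▸ Finset.mem_insert_self _ _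
  · obtain ⟨i, i', hne, he⟩ := mem_Bs.mp hj
    have e1 : γ (i, j) = γ' (i, j) := by
      by_contra hc
      exact h (congrArg Prod.snd (hdiff _ hc))
    have e2 : γ (i', j) = γ' (i', j) := by
      by_contra hc
      exact h (congrArg Prod.snd (hdiff _ hc))
    exact Finset.mem_insert_of_mem (mem_Bs.mpr ⟨i, i', hne, by rw [e1, e2, he]⟩)

/-- The number of non-rainbow columns changes by at most one per recoloring step. -/
lemma Bs_card_step {k : ℕ} {γ γ' : Fin k × Fin k → ℕ}
    (hdiff : ∀ u w, γ u ≠ γ' u → γ w ≠ γ' w → u = w) :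
    (Bs γ').card ≤ (Bs γ).card + 1 := by
  by_cases h : ∀ u, γ u = γ' u
  · rw [funext h]
    omega
  · push_neg at h
    obtain ⟨v, hv⟩ := h
    calc (Bs γ').card ≤ (insert v.2 (Bs γ)).card :=
          Finset.card_le_card (Bs_step v (fun u hu => hdiff u v hu hv))
      _ ≤ (Bs γ).card + 1 := Finset.card_insert_le _ _

open Classical in
/-- A choice of a repeated color in column `j` (when one exists). -/
noncomputable def pick {k : ℕ} (γ : Fin k × Fin k → ℕ) (j : Fin k) : ℕ :=
  if h : Vcol γ j then γ (h.choose, j) else 0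

lemma pick_eq {k : ℕ} {γ : Fin k × Fin k → ℕ} {j : Fin k} (hV : Vcol γ j) :
    pick γ j = γ (hV.choose, j) := by
  unfold pick
  rw [dif_pos hV]

lemma pick_class {k : ℕ} {γ : Fin k × Fin k → ℕ}
    (hp : ∀ u w, (Bgraph k).Adj u w → γ u ≠ γ w) {j : Fin k} (hV : Vcol γ j) :
    ∀ u : Fin k × Fin k, γ u = pick γ j → u.2 = j := by
  obtain ⟨i', hne, he⟩ := hV.choose_spec
  rw [pick_eq hV]
  exact class_in_col hp hne he

/-- Key counting lemma: a proper coloring of `B_k` with exactly `k-1` non-rainbow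
columns uses at least `2k-1` colors. -/
lemma key {k : ℕ} (hk : 2 ≤ k) {γ : Fin k × Fin k → ℕ}
    (hp : ∀ u w, (Bgraph k).Adj u w → γ u ≠ γ w)
    (hb : (Bs γ).card = k - 1) :
    2 * k - 1 ≤ (Finset.univ.image γ).card := by
  classical
  -- there is a rainbow column j₀
  have hex : ∃ j₀, j₀ ∉ Bs γ := by
    by_contra h
    push_neg at h
    have huniv : Bs γ = Finset.univ := Finset.eq_univ_iff_forall.mpr h
    rw [huniv, Finset.card_univ, Fintype.card_fin] at hb
    omega
  obtain ⟨j₀, hj₀⟩ := hex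
  set S₁ : Finset ℕ := Finset.univ.image (fun i : Fin k => γ (i, j₀)) with hS₁
  set S₂ : Finset ℕ := (Bs γ).image (pick γ) with hS₂
  have hcard₁ : S₁.card = k := by
    rw [hS₁, Finset.card_image_of_injective _ ?_, Finset.card_univ, Fintype.card_fin]
    intro i i' h
    by_contra hne
    exact hj₀ (mem_Bs.mpr ⟨i, i', hne, h⟩)
  have hcard₂ : S₂.card = k - 1 := by
    rw [hS₂, Finset.card_image_of_injOn, hb]
    intro j hj j' hj' he
    have hVj := mem_Bs.mp hj
    have hVj' := mem_Bs.mp hj'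
    have h1 : γ (hVj.choose, j) = pick γ j' := by rw [← he, pick_eq hVj]
    exact pick_class hp hVj' (hVj.choose, j) h1
  have hdisj : Disjoint S₁ S₂ := by
    rw [Finset.disjoint_left]
    intro x hx1 hx2
    rw [hS₁, Finset.mem_image] at hx1
    rw [hS₂, Finset.mem_image] at hx2
    obtain ⟨i, -, hi⟩ := hx1
    obtain ⟨j, hj, hjx⟩ := hx2
    have hVj := mem_Bs.mp hj
    have : ((i, j₀) : Fin k × Fin k).2 = j :=
      pick_class hp hVj (i, j₀) (by rw [hi, hjx])
    exact hj₀ (by rw [show j₀ = j from this]; exact hj)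
  have hsub : S₁ ∪ S₂ ⊆ Finset.univ.image γ := by
    intro x hx
    rcases Finset.mem_union.mp hx with hx | hx
    · rw [hS₁, Finset.mem_image] at hx
      obtain ⟨i, -, hi⟩ := hx
      exact Finset.mem_image.mpr ⟨(i, j₀), Finset.mem_univ _, hi⟩
    · rw [hS₂, Finset.mem_image] at hx
      obtain ⟨j, hj, hjx⟩ := hx
      have hVj := mem_Bs.mp hj
      exact Finset.mem_image.mpr ⟨(hVj.choose, j), Finset.mem_univ _,
        by rw [← pick_eq hVj, hjx]⟩
  have := Finset.card_le_card hsub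
  rw [Finset.card_union_of_disjoint hdisj, hcard₁, hcard₂] at this
  omega

/-- For every `k ≥ 1`, every recoloring sequence (with any number `K` of
admissible colors) from `α^k` to `β^k` on `B_k` contains a coloring that uses at least
`2k - 1` different colors. -/
theorem stmt_0 (k : ℕ) (hk : 1 ≤ k) (K ℓ : ℕ) (seq : ℕ → Fin k × Fin k → ℕ)
    (hseq : IsRecolSeq (Bgraph k) K seq ℓ (alphak k) (betak k)) :
    ∃ i ≤ ℓ, 2 * k - 1 ≤ (Finset.univ.image (seq i)).card := by
  obtain ⟨h0, hl, hcolor, hstep⟩ := hseq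
  rcases eq_or_lt_of_le hk with hk1 | hk2
  · -- k = 1 : any coloring uses at least one color
    refine ⟨0, Nat.zero_le _, ?_⟩
    have : (0 : Fin k × Fin k → ℕ) = 0 := rfl
    have hne : (Finset.univ.image (seq 0)).Nonempty := by
      refine Finset.Nonempty.image ?_ _
      have : (0 : ℕ) < k := hk
      exact ⟨(⟨0, this⟩, ⟨0, this⟩), Finset.mem_univ _⟩
    have := Finset.card_pos.mpr hne
    omega
  · -- k ≥ 2
    have hk2' : 2 ≤ k := hk2
    -- the number of non-rainbow columns starts at 0
    have hB0 : (Bs (seq 0)).card = 0 := by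
      rw [h0, Finset.card_eq_zero]
      ext j
      simp only [mem_Bs, Vcol, alphak, Finset.notMem_empty, iff_false]
      rintro ⟨i, i', hne, he⟩
      exact hne (Fin.val_injective (by omega))
    -- and ends at k
    have hBl : (Bs (seq ℓ)).card = k := by
      rw [hl]
      have : Bs (betak k) = Finset.univ := by
        refine Finset.eq_univ_iff_forall.mpr fun j => mem_Bs.mpr ?_
        refine ⟨⟨0, by omega⟩, ⟨1, by omega⟩, ?_, rfl⟩
        intro h
        have := congrArg Fin.val h
        simp at this
      rw [this, Finset.card_univ, Fintype.card_fin]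
    -- intermediate value: some time with exactly k-1 non-rainbow columns
    obtain ⟨t, ht, hteq⟩ := ivt (fun t => (Bs (seq t)).card) (k - 1) ℓ
      (by show (Bs (seq 0)).card ≤ k - 1; omega)
      (by show k - 1 ≤ (Bs (seq ℓ)).card; omega)
      (fun t ht => Bs_card_step (hstep t ht))
    exact ⟨t, ht, key hk2' (hcolor t ht).2 hteq⟩
end

section
/- For every integer k ≥ 1, there exists a (2k−1)-recoloring sequence from α^k to β^k on the graph B_k of length at most 2k². -/
/-- Intermediate coloring: `b^i_j ↦ j + k`. -/
def gamk (k : ℕ) : Fin k × Fin k → ℕ := fun p => p.2.val + k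

/-- Order of recoloring in phase 1: row `k-1` first. -/
def ord1 (k : ℕ) (p : Fin k × Fin k) : ℕ :=
  if p.1.val = k - 1 then p.2.val else (p.1.val + 1) * k + p.2.val

/-- Order of recoloring in phase 2: column `0` first. -/
def ord2 (k : ℕ) (p : Fin k × Fin k) : ℕ :=
  if p.2.val = 0 then p.1.val else p.2.val * k + p.1.val

def c1 (k t : ℕ) (p : Fin k × Fin k) : ℕ := if ord1 k p < t then gamk k p else alphak k p
def c2 (k t : ℕ) (p : Fin k × Fin k) : ℕ := if ord2 k p < t then betak k p else gamk k p

def mySeq (k t : ℕ) : Fin k × Fin k → ℕ :=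
  if t ≤ k ^ 2 then c1 k t else c2 k (t - k ^ 2)

lemma dm {k a b c d : ℕ} (hb : b < k) (hd : d < k) (h : a * k + b = c * k + d) :
    a = c ∧ b = d := by
  have hk : 0 < k := Nat.pos_of_ne_zero (by omega)
  have h1 : ∀ x y : ℕ, y < k → (x * k + y) / k = x := by
    intro x y hy
    rw [add_comm, Nat.add_mul_div_right _ _ hk, Nat.div_eq_of_lt hy, Nat.zero_add]
  have hac : a = c := by rw [← h1 a b hb, ← h1 c d hd, h]
  subst hac
  exact ⟨rfl, by omega⟩

lemma ord1_lt (k : ℕ) (p : Fin k × Fin k) : ord1 k p < k ^ 2 := by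
  have h1 := p.1.isLt
  have h2 := p.2.isLt
  have hk : 0 < k := Nat.pos_of_ne_zero (by omega)
  unfold ord1
  split
  · calc p.2.val < k := h2
    _ ≤ k ^ 2 := by nlinarith
  · have : p.1.val + 1 ≤ k - 1 := by omega
    have h3 : (p.1.val + 1) * k ≤ (k - 1) * k := Nat.mul_le_mul_right k this
    have h4 : (k - 1) * k + k = k ^ 2 := by
      cases k with
      | zero => omega
      | succ n => simp only [Nat.succ_sub_one, pow_two]; ring
    omega

lemma ord2_lt (k : ℕ) (p : Fin k × Fin k) : ord2 k p < k ^ 2 := by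
  have h1 := p.1.isLt
  have h2 := p.2.isLt
  have hk : 0 < k := Nat.pos_of_ne_zero (by omega)
  unfold ord2
  split
  · calc p.1.val < k := h1
    _ ≤ k ^ 2 := by nlinarith
  · have : p.2.val ≤ k - 1 := by omega
    have h3 : p.2.val * k ≤ (k - 1) * k := Nat.mul_le_mul_right k this
    have h4 : (k - 1) * k + k = k ^ 2 := by
      cases k with
      | zero => omega
      | succ n => simp only [Nat.succ_sub_one, pow_two]; ring
    omega

lemma ord1_inj {k : ℕ} {p q : Fin k × Fin k} (h : ord1 k p = ord1 k q) : p = q := by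
  have hp1 := p.1.isLt; have hp2 := p.2.isLt
  have hq1 := q.1.isLt; have hq2 := q.2.isLt
  have hk : 0 < k := Nat.pos_of_ne_zero (by omega)
  have hkle : ∀ a : ℕ, k ≤ (a + 1) * k := fun a => Nat.le_mul_of_pos_left k (by omega)
  unfold ord1 at h
  split_ifs at h with h1 h2 h2
  · exact Prod.ext (Fin.ext (by omega)) (Fin.ext h)
  · have := hkle q.1.val; omega
  · have := hkle p.1.val; omega
  · obtain ⟨ha, hb⟩ := dm hp2 hq2 h
    exact Prod.ext (Fin.ext (by omega)) (Fin.ext hb)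

lemma ord2_inj {k : ℕ} {p q : Fin k × Fin k} (h : ord2 k p = ord2 k q) : p = q := by
  have hp1 := p.1.isLt; have hp2 := p.2.isLt
  have hq1 := q.1.isLt; have hq2 := q.2.isLt
  have hk : 0 < k := Nat.pos_of_ne_zero (by omega)
  have hkle : ∀ a : ℕ, a ≠ 0 → k ≤ a * k := fun a ha => Nat.le_mul_of_pos_left k (by omega)
  unfold ord2 at h
  split_ifs at h with h1 h2 h2
  · exact Prod.ext (Fin.ext h) (Fin.ext (by omega))
  · have := hkle q.2.val h2; omega
  · have := hkle p.2.val h1; omega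
  · obtain ⟨ha, hb⟩ := dm hp1 hq1 h
    exact Prod.ext (Fin.ext hb) (Fin.ext ha)

lemma col1 {k : ℕ} (hk : 1 ≤ k) (t : ℕ) : IsKColoring (Bgraph k) (2 * k - 1) (c1 k t) := by
  constructor
  · intro p
    have h1 := p.1.isLt; have h2 := p.2.isLt
    unfold c1 gamk alphak
    split <;> (rw [Finset.mem_Icc]; omega)
  · rintro u v ⟨h1, h2⟩ heq
    have hu1 := u.1.isLt; have hu2 := u.2.isLt
    have hv1 := v.1.isLt; have hv2 := v.2.isLt
    have h1' : u.1.val ≠ v.1.val := fun h => h1 (Fin.ext h)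
    have h2' : u.2.val ≠ v.2.val := fun h => h2 (Fin.ext h)
    have hkle : ∀ a : ℕ, k ≤ (a + 1) * k := fun a => Nat.le_mul_of_pos_left k (by omega)
    unfold c1 gamk alphak at heq
    split_ifs at heq with g1 g2 g2
    · omega
    · -- u recolored to u.2+k, v still at v.1+1; equal forces u.2=0, v.1=k-1
      have hv1k : v.1.val = k - 1 := by omega
      have hu2z : u.2.val = 0 := by omega
      have hou : ord1 k u = (u.1.val + 1) * k + u.2.val := by
        unfold ord1; rw [if_neg]; omega
      have hov : ord1 k v = v.2.val := by unfold ord1; rw [if_pos hv1k]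
      have := hkle u.1.val
      omega
    · have hu1k : u.1.val = k - 1 := by omega
      have hv2z : v.2.val = 0 := by omega
      have hov : ord1 k v = (v.1.val + 1) * k + v.2.val := by
        unfold ord1; rw [if_neg]; omega
      have hou : ord1 k u = u.2.val := by unfold ord1; rw [if_pos hu1k]
      have := hkle v.1.val
      omega
    · omega

lemma col2 {k : ℕ} (hk : 1 ≤ k) (t : ℕ) : IsKColoring (Bgraph k) (2 * k - 1) (c2 k t) := by
  constructor
  · intro p
    have h1 := p.1.isLt; have h2 := p.2.isLt
    unfold c2 gamk betak
    split <;> (rw [Finset.mem_Icc]; omega)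
  · rintro u v ⟨h1, h2⟩ heq
    have hu1 := u.1.isLt; have hu2 := u.2.isLt
    have hv1 := v.1.isLt; have hv2 := v.2.isLt
    have h1' : u.1.val ≠ v.1.val := fun h => h1 (Fin.ext h)
    have h2' : u.2.val ≠ v.2.val := fun h => h2 (Fin.ext h)
    have hkle : ∀ a : ℕ, a ≠ 0 → k ≤ a * k := fun a ha => Nat.le_mul_of_pos_left k (by omega)
    unfold c2 gamk betak at heq
    split_ifs at heq with g1 g2 g2
    · omega
    · -- u at β = u.2+1, v at γ = v.2+k; equal forces u.2 = k-1, v.2 = 0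
      have hu2k : u.2.val = k - 1 := by omega
      have hv2z : v.2.val = 0 := by omega
      have hou : ord2 k u = u.2.val * k + u.1.val := by
        unfold ord2; rw [if_neg]; omega
      have hov : ord2 k v = v.1.val := by unfold ord2; rw [if_pos hv2z]
      have := hkle u.2.val (by omega)
      omega
    · have hv2k : v.2.val = k - 1 := by omega
      have hu2z : u.2.val = 0 := by omega
      have hov : ord2 k v = v.2.val * k + v.1.val := by
        unfold ord2; rw [if_neg]; omega
      have hou : ord2 k u = u.1.val := by unfold ord2; rw [if_pos hu2z]
      have := hkle v.2.val (by omega)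
      omega
    · omega

lemma diff1 {k t : ℕ} {u : Fin k × Fin k} (h : c1 k t u ≠ c1 k (t + 1) u) :
    ord1 k u = t := by
  by_contra hne
  apply h
  unfold c1
  rcases Nat.lt_or_ge (ord1 k u) t with h' | h'
  · rw [if_pos h', if_pos (by omega)]
  · rw [if_neg (by omega), if_neg (by omega)]

lemma diff2 {k t : ℕ} {u : Fin k × Fin k} (h : c2 k t u ≠ c2 k (t + 1) u) :
    ord2 k u = t := by
  by_contra hne
  apply h
  unfold c2
  rcases Nat.lt_or_ge (ord2 k u) t with h' | h'
  · rw [if_pos h', if_pos (by omega)]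
  · rw [if_neg (by omega), if_neg (by omega)]

lemma c1_top {k : ℕ} : c1 k (k ^ 2) = c2 k 0 := by
  funext p
  unfold c1 c2
  rw [if_pos (ord1_lt k p), if_neg (by omega)]

/-- For every `k ≥ 1`, there exists a `(2k-1)`-recoloring sequence from
`α^k` to `β^k` on `B_k` of length at most `2k²`. -/
theorem stmt_1 (k : ℕ) (hk : 1 ≤ k) :
    ∃ ℓ ≤ 2 * k ^ 2, ∃ seq : ℕ → Fin k × Fin k → ℕ,
      IsRecolSeq (Bgraph k) (2 * k - 1) seq ℓ (alphak k) (betak k) := by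
  have hk2 : 0 < k ^ 2 := by positivity
  refine ⟨2 * k ^ 2, le_refl _, mySeq k, ?_, ?_, ?_, ?_⟩
  · -- seq 0 = α
    funext p
    unfold mySeq
    rw [if_pos (by omega)]
    unfold c1
    rw [if_neg (by omega)]
  · -- seq (2k²) = β
    funext p
    unfold mySeq
    rw [if_neg (by omega)]
    have h := ord2_lt k p
    unfold c2
    rw [if_pos (by omega)]
  · intro i _
    unfold mySeq
    split
    · exact col1 hk _
    · exact col2 hk _
  · intro i hi u w hu hw
    rcases Nat.lt_or_ge i (k ^ 2) with hcase | hcase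
    · -- phase 1 step
      have e1 : mySeq k i = c1 k i := by unfold mySeq; rw [if_pos (by omega)]
      have e2 : mySeq k (i + 1) = c1 k (i + 1) := by unfold mySeq; rw [if_pos (by omega)]
      rw [e1, e2] at hu hw
      exact ord1_inj ((diff1 hu).trans (diff1 hw).symm)
    · -- phase 2 (including boundary i = k²)
      have e1 : mySeq k i = c2 k (i - k ^ 2) := by
        unfold mySeq
        rcases Nat.eq_or_lt_of_le hcase with h' | h'
        · rw [if_pos (by omega), ← h', Nat.sub_self, ← c1_top, h']
        · rw [if_neg (by omega)]
      have e2 : mySeq k (i + 1) = c2 k ((i - k ^ 2) + 1) := by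
        unfold mySeq
        rw [if_neg (by omega), show i + 1 - k ^ 2 = (i - k ^ 2) + 1 from by omega]
      rw [e1, e2] at hu hw
      exact ord2_inj ((diff2 hu).trans (diff2 hw).symm)
end

section
/- Let G be a graph on n vertices that admits a k-coloring, and let α and β be any two k-colorings of G. Then there exists a (2k−1)-recoloring sequence from α to β in which every vertex is recolored at most twice; in particular, its length is at most 2n. -/
lemma exists_block_pos {V : Type*} [Fintype V] (p : V → Prop) :
    ∃ pos : V → ℕ, Function.Injective pos ∧ (∀ v, pos v < Fintype.card V) ∧
      ∀ u v, p v → ¬ p u → pos v < pos u := by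
  classical
  set l1 := (Finset.univ.filter p).toList with hl1
  set l2 := (Finset.univ.filter (fun v => ¬ p v)).toList with hl2
  set l := l1 ++ l2 with hl
  have hmem1 : ∀ v, p v → v ∈ l1 := fun v hv => by
    simp [hl1, Finset.mem_toList, hv]
  have hnotmem1 : ∀ v, ¬ p v → v ∉ l1 := fun v hv => by
    simp [hl1, Finset.mem_toList, hv]
  have hmem : ∀ v, v ∈ l := by
    intro v
    by_cases hv : p v
    · exact List.mem_append_left _ (hmem1 v hv)
    · exact List.mem_append_right _ (by simp [hl2, Finset.mem_toList, hv])
  have hlen : l.length = Fintype.card V := by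
    rw [hl, List.length_append, hl1, hl2, Finset.length_toList, Finset.length_toList]
    simpa using Finset.card_filter_add_card_filter_not (s := Finset.univ) (p := p)
  refine ⟨fun v => l.idxOf v, ?_, ?_, ?_⟩
  · intro a b h
    exact (List.idxOf_inj (hmem a)).mp h
  · intro v
    rw [← hlen]
    exact List.idxOf_lt_length_iff.mpr (hmem v)
  · intro u v hv hu
    have h1 : l.idxOf v < l1.length := by
      rw [hl, List.idxOf_append_of_mem (hmem1 v hv)]
      exact List.idxOf_lt_length_iff.mpr (hmem1 v hv)
    have h2 : l1.length ≤ l.idxOf u := by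
      rw [hl, List.idxOf_append_of_notMem (hnotmem1 u hu)]
      omega
    exact lt_of_lt_of_le h1 h2

/-- If `G` on `n` vertices admits a `k`-coloring and `α`, `β` are two
`k`-colorings of `G`, then there is a `(2k-1)`-recoloring sequence from `α` to `β`
in which every vertex is recolored at most twice; in particular its length is at
most `2n`. -/
theorem stmt_2 {V : Type*} [Fintype V] (G : SimpleGraph V) (k : ℕ)
    (hcolorable : ∃ γ : V → ℕ, IsKColoring G k γ)
    (α β : V → ℕ) (hα : IsKColoring G k α) (hβ : IsKColoring G k β) :
    ∃ ℓ ≤ 2 * Fintype.card V, ∃ seq : ℕ → V → ℕ,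
      IsRecolSeq G (2 * k - 1) seq ℓ α β ∧
      ∀ v, ((Finset.range ℓ).filter (fun i => seq i v ≠ seq (i+1) v)).card ≤ 2 := by
  classical
  set n := Fintype.card V with hn
  by_cases hV : IsEmpty V
  · have hab : α = β := funext fun v => hV.elim v
    refine ⟨0, Nat.zero_le _, fun _ => α, ⟨rfl, hab, ?_, ?_⟩, ?_⟩
    · exact fun i _ => ⟨fun v => hV.elim v, fun u v _ => hV.elim v⟩
    · intro i hi; exact absurd hi (Nat.not_lt_zero i)
    · intro v; exact hV.elim v
  rw [not_isEmpty_iff] at hV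
  obtain ⟨γ0, hγ0⟩ := hcolorable
  obtain ⟨v0⟩ := hV
  have hk : 1 ≤ k := by
    have := Finset.mem_Icc.mp (hγ0.1 v0); omega
  have hn1 : 1 ≤ n := Fintype.card_pos_iff.mpr ⟨v0⟩
  have hαb : ∀ v, 1 ≤ α v ∧ α v ≤ k := fun v => Finset.mem_Icc.mp (hα.1 v)
  have hβb : ∀ v, 1 ≤ β v ∧ β v ≤ k := fun v => Finset.mem_Icc.mp (hβ.1 v)
  obtain ⟨pos1, hinj1, hlt1, hblk1⟩ := exists_block_pos (fun v => α v = k)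
  obtain ⟨pos2, hinj2, hlt2, hblk2⟩ := exists_block_pos (fun v => β v = 1)
  set seq : ℕ → V → ℕ :=
    fun i v => if pos1 v < i then (if n + pos2 v < i then β v else k - 1 + β v) else α v
    with hseq
  -- trichotomy of forms
  have hform : ∀ j x, (seq j x = α x ∧ j ≤ pos1 x) ∨
      (seq j x = k - 1 + β x ∧ pos1 x < j ∧ j ≤ n + pos2 x) ∨
      (seq j x = β x ∧ n + pos2 x < j) := by
    intro j x
    simp only [hseq]
    rcases lt_or_ge (pos1 x) j with h1 | h1
    · rcases lt_or_ge (n + pos2 x) j with h2 | h2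
      · exact Or.inr (Or.inr ⟨by rw [if_pos h1, if_pos h2], h2⟩)
      · exact Or.inr (Or.inl ⟨by rw [if_pos h1, if_neg (by omega)], h1, h2⟩)
    · exact Or.inl ⟨by rw [if_neg (by omega)], h1⟩
  have hstep : ∀ i v, seq i v ≠ seq (i+1) v → pos1 v = i ∨ n + pos2 v = i := by
    intro i v h
    by_contra hc
    push_neg at hc
    apply h
    simp only [hseq]
    split_ifs <;> first | rfl | omega
  refine ⟨2 * n, by omega, seq, ⟨?_, ?_, ?_, ?_⟩, ?_⟩
  · funext v
    simp [hseq]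
  · funext v
    have h1 := hlt1 v
    have h2 := hlt2 v
    simp only [hseq]
    rw [if_pos (by omega), if_pos (by omega)]
  · intro i _
    constructor
    · intro v
      have h1 := hαb v
      have h2 := hβb v
      simp only [hseq, Finset.mem_Icc]
      split_ifs <;> omega
    · intro u v huv
      have hneα := hα.2 u v huv
      have hneβ := hβ.2 u v huv
      have h1u := hαb u; have h1v := hαb v
      have h2u := hβb u; have h2v := hβb v
      rcases hform i u with ⟨hu, hu'⟩ | ⟨hu, hu'⟩ | ⟨hu, hu'⟩ <;>
        rcases hform i v with ⟨hv, hv'⟩ | ⟨hv, hv'⟩ | ⟨hv, hv'⟩ <;>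
        rw [hu, hv]
      · exact hneα
      · -- α u vs mid v
        intro h
        have hbu : α u = k := by omega
        have hbv1 : β v = 1 := by omega
        by_cases hp : α v = k
        · exact hneα (by omega)
        · have := hblk1 v u hbu hp
          omega
      · -- α u vs β v : impossible positions
        have := hlt1 u; intro h; omega
      · -- mid u vs α v
        intro h
        have hbv : α v = k := by omega
        have hbu1 : β u = 1 := by omega
        by_cases hp : α u = k
        · exact hneα (by omega)
        · have := hblk1 u v hbv hp
          omega
      · -- mid vs mid
        intro h
        exact hneβ (by omega)
      · -- mid u vs β v
        intro h
        have hbu1 : β u = 1 := by omega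
        have hbvk : β v = k := by omega
        by_cases hp : β v = 1
        · exact hneβ (by omega)
        · have := hblk2 v u hbu1 hp
          omega
      · -- β u vs α v : impossible
        have := hlt1 v; intro h; omega
      · -- β u vs mid v
        intro h
        have hbv1 : β v = 1 := by omega
        have hbuk : β u = k := by omega
        by_cases hp : β u = 1
        · exact hneβ (by omega)
        · have := hblk2 u v hbv1 hp
          omega
      · exact hneβ
  · intro i _ u w hu hw
    rcases hstep i u hu with h1 | h1 <;> rcases hstep i w hw with h2 | h2
    · exact hinj1 (h1.trans h2.symm)
    · exfalso; have := hlt1 u; omega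
    · exfalso; have := hlt1 w; omega
    · exact hinj2 (by omega)
  · intro v
    have hsub : (Finset.range (2 * n)).filter (fun i => seq i v ≠ seq (i+1) v) ⊆
        {pos1 v, n + pos2 v} := by
      intro i hi
      rw [Finset.mem_filter] at hi
      rcases hstep i v hi.2 with h | h <;> simp [h.symm]
    exact le_trans (Finset.card_le_card hsub)
      (le_trans (Finset.card_insert_le _ _) (by simp))
end

section
/- Let k ≥ 1 and let γ be a proper coloring of the graph B_k (with any set of colors). Suppose that for some index i, γ assigns k pairwise distinct colors to the vertices of row R_i, and that for every index i' ≠ i, some color is assigned by γ to at least two distinct vertices of row R_{i'}. Then γ uses at least 2k − 1 different colors in total. -/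
/-- Let `k ≥ 1` and `γ` a proper coloring of `B_k` (with any colors).
If row `R_i` receives `k` pairwise distinct colors, and every other row `R_{i'}` has some
color repeated on two distinct vertices, then `γ` uses at least `2k - 1` colors in total. -/
theorem stmt_4 (k : ℕ) (hk : 1 ≤ k) (γ : Fin k × Fin k → ℕ)
    (hγ : ∀ p q, (Bgraph k).Adj p q → γ p ≠ γ q)
    (i : Fin k) (hrainbow : Function.Injective (fun j => γ (i, j)))
    (hrep : ∀ i' : Fin k, i' ≠ i → ∃ j j' : Fin k, j ≠ j' ∧ γ (i', j) = γ (i', j')) :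
    2 * k - 1 ≤ (Finset.univ.image γ).card := by
  classical
  choose j j' hjj hcol using hrep
  -- key lemma
  have key : ∀ i1 i2 : Fin k, i1 ≠ i2 → ∀ (h1 : i1 ≠ i), ∀ m : Fin k,
      γ (i1, j i1 h1) ≠ γ (i2, m) := by
    intro i1 i2 h12 h1 m
    by_cases hm : m = j i1 h1
    · have hm' : m ≠ j' i1 h1 := by
        rw [hm]; exact hjj i1 h1
      have := hγ (i1, j' i1 h1) (i2, m) ⟨h12, hm'.symm⟩
      rw [← hcol i1 h1] at this
      exact this
    · exact hγ (i1, j i1 h1) (i2, m) ⟨h12, fun e => hm e.symm⟩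
  set A := Finset.univ.image (fun m => γ (i, m)) with hA
  set B := (Finset.univ.erase i).image
      (fun i' => if h : i' ≠ i then γ (i', j i' h) else 0) with hB
  have hAcard : A.card = k := by
    rw [hA, Finset.card_image_of_injective _ hrainbow, Finset.card_univ, Fintype.card_fin]
  have hBcard : B.card = k - 1 := by
    rw [hB, Finset.card_image_of_injOn, Finset.card_erase_of_mem (Finset.mem_univ i),
      Finset.card_univ, Fintype.card_fin]
    intro i1 hi1 i2 hi2 heq
    simp only [Finset.mem_coe, Finset.mem_erase] at hi1 hi2
    simp only [dif_pos hi1.1, dif_pos hi2.1] at heq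
    by_contra hne
    exact key i1 i2 hne hi1.1 (j i2 hi2.1) heq
  have hdisj : Disjoint A B := by
    rw [Finset.disjoint_left]
    intro a ha hb
    rw [hA, Finset.mem_image] at ha
    rw [hB, Finset.mem_image] at hb
    obtain ⟨m, -, hm⟩ := ha
    obtain ⟨i1, hi1, hi1a⟩ := hb
    rw [Finset.mem_erase] at hi1
    rw [dif_pos hi1.1] at hi1a
    exact key i1 i hi1.1 hi1.1 m (hi1a.trans hm.symm)
  have hsub : A ∪ B ⊆ Finset.univ.image γ := by
    intro a ha
    rw [Finset.mem_union] at ha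
    rcases ha with ha | ha
    · rw [hA, Finset.mem_image] at ha
      obtain ⟨m, -, hm⟩ := ha
      exact Finset.mem_image.mpr ⟨(i, m), Finset.mem_univ _, hm⟩
    · rw [hB, Finset.mem_image] at ha
      obtain ⟨i1, hi1, hm⟩ := ha
      rw [Finset.mem_erase] at hi1
      rw [dif_pos hi1.1] at hm
      exact Finset.mem_image.mpr ⟨(i1, j i1 hi1.1), Finset.mem_univ _, hm⟩
  have := Finset.card_le_card hsub
  rw [Finset.card_union_of_disjoint hdisj, hAcard, hBcard] at this
  omega
end

section
/- Let k ≥ 4, let G be a graph with a color list assignment L satisfying L(v) ⊆ {1,…,4} for all v, and let α, β be L-colorings of G. Construct G' from G by adding k new pairwise adjacent vertices x_1, …, x_k and, for every v ∈ V(G) and every i ∈ {1,…,k} \ L(v), the edge v x_i. Extend any L-coloring γ of G to a k-coloring γ' of G' by setting γ'(x_i) = i. Then for every integer ℓ ≥ 0: there exists an L-recoloring sequence for G from α to β of length at most ℓ if and only if there exists a k-recoloring sequence for G' from α' to β' of length at most ℓ. In particular, the distance between α and β in the reconfiguration graph of L-colorings of G equals the distance between α' and β' in the reconfiguration graph of k-colorings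 of G' (possibly both infinite). -/
/-- An `L`-coloring of `G`: every vertex gets a color from its list, and adjacent
vertices get different colors. -/
def IsLColoring {V : Type*} (G : SimpleGraph V) (L : V → Finset ℕ) (γ : V → ℕ) : Prop :=
  (∀ v, γ v ∈ L v) ∧ ∀ u v, G.Adj u v → γ u ≠ γ v

/-- An `L`-recoloring sequence `seq 0, …, seq ℓ` from `α` to `β`: all are `L`-colorings,
and consecutive colorings differ on at most one vertex. -/
def IsLRecolSeq {V : Type*} (G : SimpleGraph V) (L : V → Finset ℕ) (seq : ℕ → V → ℕ)
    (ℓ : ℕ) (α β : V → ℕ) : Prop :=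
  seq 0 = α ∧ seq ℓ = β ∧ (∀ i ≤ ℓ, IsLColoring G L (seq i)) ∧
  ∀ i < ℓ, ∀ u w, seq i u ≠ seq (i+1) u → seq i w ≠ seq (i+1) w → u = w

/-- The graph `G'` obtained from `G` by adding `k` pairwise adjacent new vertices
`x_1,…,x_k`, with an edge `v x_i` for every `v ∈ V(G)` and `i ∈ {1,…,k} \ L(v)`. -/
def ListToK {V : Type*} (G : SimpleGraph V) (L : V → Finset ℕ) (k : ℕ) :
    SimpleGraph (V ⊕ Fin k) where
  Adj w w' :=
    match w, w' with
    | .inl u, .inl v => G.Adj u v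
    | .inl v, .inr i => (i.val + 1) ∉ L v
    | .inr i, .inl v => (i.val + 1) ∉ L v
    | .inr i, .inr j => i ≠ j
  symm := by
    constructor
    rintro (u | i) (v | j) h
    · exact G.adj_symm h
    · exact h
    · exact h
    · exact fun e => h e.symm
  loopless := by
    constructor
    rintro (u | i) h
    · exact G.irrefl h
    · exact h rfl

/-- Extending a coloring `γ` of `G` to `G'` by `γ'(x_i) = i`. -/
def extColoring {V : Type*} (k : ℕ) (γ : V → ℕ) : V ⊕ Fin k → ℕ
  | .inl v => γ v
  | .inr i => i.val + 1

/-- For `k ≥ 4`, lists `L(v) ⊆ {1,…,4}` and `L`-colorings `α`, `β` of `G`: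
for every `ℓ ≥ 0`, there is an `L`-recoloring sequence for `G` from `α` to `β` of length
at most `ℓ` iff there is a `k`-recoloring sequence for `G'` from `α'` to `β'` of length
at most `ℓ`. (In particular the two reconfiguration distances coincide, possibly both
infinite.) -/
theorem stmt_9 {V : Type*} (G : SimpleGraph V) (k : ℕ) (hk : 4 ≤ k)
    (L : V → Finset ℕ) (hL : ∀ v, L v ⊆ Finset.Icc 1 4)
    (α β : V → ℕ) (hα : IsLColoring G L α) (hβ : IsLColoring G L β) (ℓ : ℕ) :
    (∃ ℓ' ≤ ℓ, ∃ seq : ℕ → V → ℕ, IsLRecolSeq G L seq ℓ' α β) ↔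
    (∃ ℓ' ≤ ℓ, ∃ seq : ℕ → V ⊕ Fin k → ℕ,
      IsRecolSeq (ListToK G L k) k seq ℓ' (extColoring k α) (extColoring k β)) := by
  constructor
  · rintro ⟨ℓ', hℓ', seq, h0, h1, hcols, honev⟩
    refine ⟨ℓ', hℓ', fun i => extColoring k (seq i), ?_, ?_, ?_, ?_⟩
    · show extColoring k (seq 0) = _; rw [h0]
    · show extColoring k (seq ℓ') = _; rw [h1]
    · intro i hi
      obtain ⟨hmem, hadj⟩ := hcols i hi
      constructor
      · rintro (v | j)
        · have := hL v (hmem v)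
          simp only [Finset.mem_Icc] at this ⊢
          exact ⟨this.1, le_trans this.2 hk⟩
        · simp only [extColoring, Finset.mem_Icc]
          omega
      · rintro (u | j) (v | j') hadj'
        · exact hadj u v hadj'
        · intro h
          have h' : seq i u = j'.val + 1 := h
          exact hadj' (h' ▸ hmem u)
        · intro h
          have h' : j.val + 1 = seq i v := h
          exact hadj' (h'.symm ▸ hmem v)
        · simp only [extColoring]
          have : j ≠ j' := hadj'
          omega
    · intro i hi u w hu hw
      match u, w with
      | .inl u, .inl w => exact congrArg Sum.inl (honev i hi u w hu hw)
      | .inl u, .inr j => exact absurd rfl hw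
      | .inr j, _ => exact absurd rfl hu
  · rintro ⟨ℓ', hℓ', seq, h0, h1, hcols, honev⟩
    have hfix : ∀ i ≤ ℓ', ∀ j : Fin k, seq i (.inr j) = j.val + 1 := by
      intro i
      induction i with
      | zero => intro _ j; rw [h0]; rfl
      | succ n ih =>
        intro hn j
        have hn' : n ≤ ℓ' := Nat.le_of_succ_le hn
        by_contra hne
        obtain ⟨hmem, hadj⟩ := hcols (n+1) hn
        have hc := Finset.mem_Icc.1 (hmem (.inr j))
        have hmlt : seq (n+1) (.inr j) - 1 < k := by omega
        set m : Fin k := ⟨seq (n+1) (.inr j) - 1, hmlt⟩ with hm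
        have hmval : m.val + 1 = seq (n+1) (.inr j) := by simp [hm]; omega
        have hmj : m ≠ j := fun h => hne (h ▸ hmval).symm
        have hchg : seq n (.inr j) ≠ seq (n+1) (.inr j) := by
          rw [ih hn' j]; exact fun h => hne h.symm
        have hmun : seq n (.inr m) = seq (n+1) (.inr m) := by
          by_contra hmne
          have := honev n (Nat.lt_of_succ_le hn) _ _ hmne hchg
          exact hmj (Sum.inr.inj this)
        have heq : seq (n+1) (.inr m) = seq (n+1) (.inr j) := by
          rw [← hmun, ih hn' m, hmval]
        exact hadj (.inr m) (.inr j) hmj heq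
    refine ⟨ℓ', hℓ', fun i v => seq i (.inl v), ?_, ?_, ?_, ?_⟩
    · funext v; show seq 0 (.inl v) = α v; rw [h0]; rfl
    · funext v; show seq ℓ' (.inl v) = β v; rw [h1]; rfl
    · intro i hi
      obtain ⟨hmem, hadj⟩ := hcols i hi
      refine ⟨fun v => ?_, fun u v h => hadj (.inl u) (.inl v) h⟩
      by_contra hnL
      have hc := Finset.mem_Icc.1 (hmem (.inl v))
      have hmlt : seq i (.inl v) - 1 < k := by omega
      have hadj' : (ListToK G L k).Adj (.inl v) (.inr ⟨seq i (.inl v) - 1, hmlt⟩) := by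
        show seq i (.inl v) - 1 + 1 ∉ L v
        intro h
        apply hnL
        have : seq i (.inl v) - 1 + 1 = seq i (.inl v) := by omega
        rwa [this] at h
      have := hadj _ _ hadj'
      rw [hfix i hi] at this
      simp only at this
      omega
    · intro i hi u w hu hw
      exact Sum.inl.inj (honev i hi (.inl u) (.inl w) hu hw)
end

section
/- Let G be a graph with k-colorings α and β, let B ⊆ V(G), and suppose α(v) = β(v) for every v ∉ B. Let L assign to each v ∈ B a list L(v) ⊆ {1,…,k} with α(v) ∈ L(v) and β(v) ∈ L(v). Suppose that for every vertex u ∉ B and every neighbor v ∈ B of u, α(u) ∉ L(v). Then for every L-recoloring sequence γ_0, …, γ_ℓ of the induced subgraph G[B] from α restricted to B to β restricted to B, the sequence of maps obtained by extending each γ_i with the values of α on V(G) \ B is a k-recoloring sequence for G from α to β of length ℓ. -/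
/-- Let `α`, `β` be `k`-colorings of `G` agreeing outside `B ⊆ V(G)`, and
let `L` assign to each `v ∈ B` a list `L(v) ⊆ {1,…,k}` containing `α(v)` and `β(v)`.
Suppose that for every `u ∉ B` and every neighbor `v ∈ B` of `u` we have `α(u) ∉ L(v)`.
Then every `L`-recoloring sequence of `G[B]` from `α|_B` to `β|_B`, extended by the
values of `α` on `V(G) \ B`, is a `k`-recoloring sequence for `G` from `α` to `β` of the
same length. -/
theorem stmt_18 {V : Type*} (G : SimpleGraph V) (k : ℕ) (α β : V → ℕ)
    (hα : IsKColoring G k α) (hβ : IsKColoring G k β)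
    (B : Set V) [DecidablePred (· ∈ B)]
    (hout : ∀ v ∉ B, α v = β v)
    (L : V → Finset ℕ)
    (hLk : ∀ v ∈ B, L v ⊆ Finset.Icc 1 k)
    (hαL : ∀ v ∈ B, α v ∈ L v) (hβL : ∀ v ∈ B, β v ∈ L v)
    (hsep : ∀ u ∉ B, ∀ v ∈ B, G.Adj u v → α u ∉ L v)
    (ℓ : ℕ) (seq : ℕ → ↥B → ℕ)
    (hseq : IsLRecolSeq (G.induce B) (fun v => L v.val) seq ℓ
      (fun v => α v.val) (fun v => β v.val)) :
    IsRecolSeq G k (fun i v => if h : v ∈ B then seq i ⟨v, h⟩ else α v) ℓ α β := by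
  obtain ⟨h0, hl, hcol, hstep⟩ := hseq
  refine ⟨?_, ?_, ?_, ?_⟩
  · funext v
    by_cases h : v ∈ B
    · simp only [h, dif_pos]
      exact congrFun h0 ⟨v, h⟩
    · simp [h]
  · funext v
    by_cases h : v ∈ B
    · simp only [h, dif_pos]
      exact congrFun hl ⟨v, h⟩
    · simp only [h, dif_neg, not_false_iff]
      exact hout v h
  · intro i hi
    obtain ⟨hmem, hadj⟩ := hcol i hi
    constructor
    · intro v
      by_cases h : v ∈ B
      · simp only [h, dif_pos]
        exact hLk v h (hmem ⟨v, h⟩)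
      · simp only [h, dif_neg, not_false_iff]
        exact hα.1 v
    · intro u v huv
      by_cases hu : u ∈ B <;> by_cases hv : v ∈ B <;>
        simp only [hu, hv, dif_pos, dif_neg, not_false_iff]
      · exact hadj ⟨u, hu⟩ ⟨v, hv⟩ huv
      · intro heq
        exact hsep v hv u hu huv.symm (heq ▸ hmem ⟨u, hu⟩)
      · intro heq
        exact hsep u hu v hv huv (heq.symm ▸ hmem ⟨v, hv⟩)
      · exact hα.2 u v huv
  · intro i hi u w hu hw
    by_cases hub : u ∈ B
    · by_cases hwb : w ∈ B
      · simp only [hub, hwb, dif_pos] at hu hw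
        have := hstep i hi ⟨u, hub⟩ ⟨w, hwb⟩ hu hw
        exact Subtype.ext_iff.mp this
      · simp [hwb] at hw
    · simp [hub] at hu
end
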